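/- Let ρ be a density operator and D a positive semidefinite operator with D ≤ I on a finite-dimensional Hilbert space, and suppose tr(Dρ) ≥ 1 − ε for some ε ∈ [0,1]. Then the trace distance between ρ and the post-measurement operator √D ρ √D satisfies ‖ρ − √D ρ √D‖₁ ≤ 2√ε + ε (Tender/Gentle Measurement Lemma). -/

import Mathlib

set_option maxRecDepth 8000
set_option maxHeartbeats 1000000

open Matrix
open scoped ComplexOrder

/-- The trace norm `‖X‖₁ = Σ_i |λ_i(X)|` of a Hermitian matrix
(junk value `0` off the Hermitian matrices). -/
noncomputable def traceNorm {n : Type*} [Fintype n] [DecidableEq n]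
    (X : Matrix n n ℂ) : ℝ :=
  if h : X.IsHermitian then ∑ i, |h.eigenvalues i| else 0

/-- The positive semidefinite square root of a positive semidefinite matrix
(the definition of `Matrix.PosSemidef.sqrt` in the older Mathlib). -/
noncomputable def Matrix.PosSemidef.sqrt {n 𝕜 : Type*} [Fintype n] [RCLike 𝕜] [DecidableEq n]
    {A : Matrix n n 𝕜} (hA : A.PosSemidef) : Matrix n n 𝕜 :=
  (hA.1.eigenvectorUnitary : Matrix n n 𝕜) *
    diagonal (fun i => ((√(hA.1.eigenvalues i) : ℝ) : 𝕜)) *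
    (star hA.1.eigenvectorUnitary : Matrix n n 𝕜)

theorem Matrix.PosSemidef.posSemidef_sqrt {n : Type*} [Fintype n] [DecidableEq n]
    {A : Matrix n n ℂ} (hA : A.PosSemidef) : hA.sqrt.PosSemidef := by
  unfold Matrix.PosSemidef.sqrt
  have hd : (diagonal (fun i => (RCLike.ofReal (√(hA.1.eigenvalues i)) : ℂ))).PosSemidef := by
    rw [posSemidef_diagonal_iff]
    intro i
    exact RCLike.ofReal_nonneg.mpr (Real.sqrt_nonneg _)
  have := hd.mul_mul_conjTranspose_same (hA.1.eigenvectorUnitary : Matrix n n ℂ)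
  rwa [← star_eq_conjTranspose] at this

theorem Matrix.PosSemidef.sqrt_mul_self {n : Type*} [Fintype n] [DecidableEq n]
    {A : Matrix n n ℂ} (hA : A.PosSemidef) : hA.sqrt * hA.sqrt = A := by
  unfold Matrix.PosSemidef.sqrt
  have hU : (star hA.1.eigenvectorUnitary : Matrix n n ℂ) *
      (hA.1.eigenvectorUnitary : Matrix n n ℂ) = 1 :=
    Matrix.mem_unitaryGroup_iff'.mp hA.1.eigenvectorUnitary.2
  have hd : diagonal (fun i => (RCLike.ofReal (√(hA.1.eigenvalues i)) : ℂ)) *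
      diagonal (fun i => (RCLike.ofReal (√(hA.1.eigenvalues i)) : ℂ)) =
      diagonal (RCLike.ofReal ∘ hA.1.eigenvalues) := by
    rw [diagonal_mul_diagonal]; congr 1; funext i
    show (RCLike.ofReal (√(hA.1.eigenvalues i)) * RCLike.ofReal (√(hA.1.eigenvalues i)) : ℂ) =
      RCLike.ofReal (hA.1.eigenvalues i)
    rw [← RCLike.ofReal_mul, Real.mul_self_sqrt (hA.eigenvalues_nonneg i)]
  simp only [Matrix.mul_assoc]
  rw [← Matrix.mul_assoc (star hA.1.eigenvectorUnitary : Matrix n n ℂ), hU, Matrix.one_mul,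
    ← Matrix.mul_assoc (diagonal _), hd]
  conv_rhs => rw [hA.1.spectral_theorem, Unitary.conjStarAlgAut_apply]
  exact (Matrix.mul_assoc _ _ _).symm

section helpers

variable {n : Type*} [Fintype n] [DecidableEq n]

private lemma gm_trace_eq_sum_sum (A B : Matrix n n ℂ) :
    trace (Aᴴ * B) = ∑ p : n × n, (starRingEnd ℂ) (A p.1 p.2) * B p.1 p.2 := by
  rw [Fintype.sum_prod_type]
  rw [Finset.sum_comm]
  simp only [trace, diag, Matrix.mul_apply, Matrix.conjTranspose_apply]
  rfl

private lemma gm_trace_conjTranspose_mul_re (A : Matrix n n ℂ) :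
    (trace (Aᴴ * A)).re = ∑ p : n × n, ‖A p.1 p.2‖ ^ 2 := by
  rw [gm_trace_eq_sum_sum, Complex.re_sum]
  congr 1; ext p
  rw [Complex.conj_mul']
  push_cast
  norm_cast

private lemma gm_trace_cs (A B : Matrix n n ℂ) :
    ‖trace (Aᴴ * B)‖ ≤
      Real.sqrt (trace (Aᴴ * A)).re * Real.sqrt (trace (Bᴴ * B)).re := by
  let x : EuclideanSpace ℂ (n × n) := WithLp.toLp 2 (fun p : n × n => A p.1 p.2)
  let y : EuclideanSpace ℂ (n × n) := WithLp.toLp 2 (fun p : n × n => B p.1 p.2)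
  have h1 : trace (Aᴴ * B) = inner ℂ x y := by
    rw [gm_trace_eq_sum_sum, EuclideanSpace.inner_eq_star_dotProduct]
    simp [dotProduct, x, y, mul_comm]
  have h2 : Real.sqrt (trace (Aᴴ * A)).re = ‖x‖ := by
    rw [gm_trace_conjTranspose_mul_re, EuclideanSpace.norm_eq]
  have h3 : Real.sqrt (trace (Bᴴ * B)).re = ‖y‖ := by
    rw [gm_trace_conjTranspose_mul_re, EuclideanSpace.norm_eq]
  rw [h1, h2, h3]
  exact norm_inner_le_norm x y

private lemma gm_psd_trace_re_nonneg {P : Matrix n n ℂ} (hP : P.PosSemidef) :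
    0 ≤ (trace P).re := by
  rw [trace, Complex.re_sum]
  apply Finset.sum_nonneg
  intro i _
  have h := hP.dotProduct_mulVec_nonneg (Pi.single i 1)
  have e : star (Pi.single i 1) ⬝ᵥ (P *ᵥ Pi.single i 1) = P i i := by
    simp [dotProduct, mulVec, Pi.single_apply, Finset.sum_ite_eq]
  rw [e] at h
  exact (Complex.le_def.mp h).1

private lemma gm_psd_trace_mul_re_nonneg {P Q : Matrix n n ℂ} (hP : P.PosSemidef)
    (hQ : Q.PosSemidef) : 0 ≤ (trace (P * Q)).re := by
  have h1 : trace (hQ.sqrt * P * hQ.sqrt) = trace (P * Q) := by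
    rw [Matrix.mul_assoc, trace_mul_comm, Matrix.mul_assoc, hQ.sqrt_mul_self]
  rw [← h1]
  have h2 : (hQ.sqrt * P * hQ.sqrt).PosSemidef := by
    have := hP.mul_mul_conjTranspose_same hQ.sqrt
    rwa [hQ.posSemidef_sqrt.1.eq] at this
  exact gm_psd_trace_re_nonneg h2

/-- conjugation of a real diagonal by a (unitary) matrix -/
private noncomputable def gmConjU (U : Matrix n n ℂ) (f : n → ℝ) : Matrix n n ℂ :=
  U * diagonal (fun i => (f i : ℂ)) * Uᴴ

variable {U : Matrix n n ℂ}

private lemma gmConjU_mul (hU : Uᴴ * U = 1) (f g : n → ℝ) :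
    gmConjU U f * gmConjU U g = gmConjU U (fun i => f i * g i) := by
  unfold gmConjU
  have hd : diagonal (fun i => (f i : ℂ)) * diagonal (fun i => (g i : ℂ))
      = diagonal (fun i => ((f i * g i : ℝ) : ℂ)) := by
    rw [diagonal_mul_diagonal]; push_cast; rfl
  simp only [Matrix.mul_assoc]
  rw [← Matrix.mul_assoc Uᴴ U, hU, Matrix.one_mul, ← Matrix.mul_assoc (diagonal _), hd]

private lemma gmConjU_sub (f g : n → ℝ) :
    gmConjU U f - gmConjU U g = gmConjU U (fun i => f i - g i) := by
  unfold gmConjU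
  rw [← Matrix.sub_mul, ← Matrix.mul_sub, diagonal_sub]
  push_cast
  rfl

private lemma gmConjU_isHermitian (f : n → ℝ) : (gmConjU U f).IsHermitian := by
  unfold gmConjU Matrix.IsHermitian
  rw [conjTranspose_mul, conjTranspose_mul, conjTranspose_conjTranspose, diagonal_conjTranspose,
    Matrix.mul_assoc]
  congr 1
  ext i j
  simp [Pi.star_def]

private lemma gmConjU_posSemidef (f : n → ℝ) (hf : ∀ i, 0 ≤ f i) :
    (gmConjU U f).PosSemidef := by
  have hdiag : (diagonal (fun i => (f i : ℂ))).PosSemidef := by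
    rw [posSemidef_diagonal_iff]
    intro i
    exact_mod_cast hf i
  exact hdiag.mul_mul_conjTranspose_same U

private lemma gmConjU_trace (hU : Uᴴ * U = 1) (f : n → ℝ) :
    trace (gmConjU U f) = ∑ i, (f i : ℂ) := by
  unfold gmConjU
  rw [trace_mul_comm, ← Matrix.mul_assoc, hU, Matrix.one_mul, trace_diagonal]

private lemma gmConjU_one (hU' : U * Uᴴ = 1) : gmConjU U (fun _ => 1) = 1 := by
  unfold gmConjU
  have : (diagonal (fun _ : n => ((1:ℝ) : ℂ))) = 1 := by
    push_cast; exact diagonal_one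
  rw [this, Matrix.mul_one, hU']

private lemma gm_spectral_conjU {A : Matrix n n ℂ} (hA : A.IsHermitian) :
    A = gmConjU (hA.eigenvectorUnitary.val) hA.eigenvalues := by
  have := hA.spectral_theorem
  rw [Unitary.conjStarAlgAut_apply, star_eq_conjTranspose] at this
  unfold gmConjU
  exact this

private lemma gm_eigenvalues_le_one {D : Matrix n n ℂ} (hD : D.IsHermitian)
    (hDle : ((1 : Matrix n n ℂ) - D).PosSemidef) (i : n) : hD.eigenvalues i ≤ 1 := by
  set v : n → ℂ := ⇑(hD.eigenvectorBasis i) with hv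
  have hnorm : star v ⬝ᵥ v = 1 := by
    have h2 := hD.eigenvectorBasis.orthonormal.1 i
    have h3 : (inner ℂ (hD.eigenvectorBasis i) (hD.eigenvectorBasis i) : ℂ) =
        dotProduct (star v) v := by
      rw [EuclideanSpace.inner_eq_star_dotProduct, dotProduct_comm]
    rw [← h3, @inner_self_eq_norm_sq_to_K ℂ, h2]
    norm_num
  have hkey := hDle.dotProduct_mulVec_nonneg v
  have hmv : ((1 : Matrix n n ℂ) - D) *ᵥ v = v - (hD.eigenvalues i) • v := by
    rw [Matrix.sub_mulVec, Matrix.one_mulVec, hD.mulVec_eigenvectorBasis]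
  rw [hmv, dotProduct_sub, hnorm, dotProduct_smul, hnorm] at hkey
  have : (0:ℝ) ≤ 1 - hD.eigenvalues i := by
    have := (Complex.le_def.mp hkey).1
    simpa using this
  linarith

end helpers

/-- Tender/Gentle Measurement Lemma: if `tr(Dρ) ≥ 1 - ε` for a density operator `ρ`
and a measurement operator `0 ≤ D ≤ I`, then `‖ρ − √D ρ √D‖₁ ≤ 2√ε + ε`. -/
theorem gentle_measurement {n : Type*} [Fintype n] [DecidableEq n]
    (ρ D : Matrix n n ℂ) (hρ : ρ.PosSemidef) (hρ1 : ρ.trace = 1)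
    (hD : D.PosSemidef) (hDle : ((1 : Matrix n n ℂ) - D).PosSemidef)
    (ε : ℝ) (hε0 : 0 ≤ ε) (hε1 : ε ≤ 1)
    (h : 1 - ε ≤ (Matrix.trace (D * ρ)).re) :
    traceNorm (ρ - hD.sqrt * ρ * hD.sqrt) ≤ 2 * Real.sqrt ε + ε := by
  classical
  set S : Matrix n n ℂ := hD.sqrt with hSdef
  have hS : S.PosSemidef := hD.posSemidef_sqrt
  have hSS : S * S = D := hD.sqrt_mul_self
  set R : Matrix n n ℂ := hρ.sqrt with hRdef
  have hR : R.PosSemidef := hρ.posSemidef_sqrt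
  have hRR : R * R = ρ := hρ.sqrt_mul_self
  -- unitary data for D
  set UD : Matrix n n ℂ := hD.1.eigenvectorUnitary.val with hUDdef
  have hUD : UDᴴ * UD = 1 := by
    have := hD.1.eigenvectorUnitary.2
    rw [Matrix.mem_unitaryGroup_iff'] at this
    rwa [star_eq_conjTranspose] at this
  set s : n → ℝ := fun i => Real.sqrt (hD.1.eigenvalues i) with hsdef
  have hSconj : S = gmConjU UD s := rfl
  have hs0 : ∀ i, 0 ≤ s i := fun i => Real.sqrt_nonneg _
  have hs1 : ∀ i, s i ≤ 1 := fun i =>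
    Real.sqrt_le_one.mpr (gm_eigenvalues_le_one hD.1 hDle i)
  -- S - D is PSD
  have hSD : (S - D).PosSemidef := by
    rw [← hSS, hSconj, gmConjU_mul hUD, gmConjU_sub]
    exact gmConjU_posSemidef _ (fun i => by
      have h1 := hs0 i; have h2 := hs1 i; nlinarith)
  -- X and its spectral data
  set X : Matrix n n ℂ := ρ - S * ρ * S with hXdef
  have hSρS : (S * ρ * S).PosSemidef := by
    have := hρ.mul_mul_conjTranspose_same S
    rwa [hS.1.eq] at this
  have hXh : X.IsHermitian := hρ.1.sub hSρS.1
  set UX : Matrix n n ℂ := hXh.eigenvectorUnitary.val with hUXdef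
  have hUX : UXᴴ * UX = 1 := by
    have := hXh.eigenvectorUnitary.2
    rw [Matrix.mem_unitaryGroup_iff'] at this
    rwa [star_eq_conjTranspose] at this
  have hUX' : UX * UXᴴ = 1 := by
    have := hXh.eigenvectorUnitary.2
    rw [Matrix.mem_unitaryGroup_iff] at this
    rwa [star_eq_conjTranspose] at this
  set lam : n → ℝ := hXh.eigenvalues with hlamdef
  have hXconj : X = gmConjU UX lam := gm_spectral_conjU hXh
  set sgn : n → ℝ := fun i => if lam i < 0 then -1 else 1 with hsgndef
  set C : Matrix n n ℂ := gmConjU UX sgn with hCdef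
  have hCh : C.IsHermitian := gmConjU_isHermitian sgn
  have hC2 : C * C = 1 := by
    rw [hCdef, gmConjU_mul hUX]
    have : (fun i => sgn i * sgn i) = fun _ : n => (1:ℝ) := by
      funext i
      by_cases hi : lam i < 0 <;> simp [hsgndef, hi]
    rw [this, gmConjU_one hUX']
  -- trace norm as trace of C * X
  have htn : traceNorm X = (trace (C * X)).re := by
    have e1 : trace (C * X) = ∑ i, ((|lam i| : ℝ) : ℂ) := by
      rw [hXconj, hCdef, gmConjU_mul hUX]
      have : (fun i => sgn i * lam i) = fun i => |lam i| := by
        funext i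
        by_cases hi : lam i < 0
        · simp [hsgndef, hi, abs_of_neg hi]
        · simp [hsgndef, hi, abs_of_nonneg (not_lt.mp hi)]
      rw [this, gmConjU_trace hUX]
    rw [e1, Complex.re_sum]
    simp [traceNorm, hXh]; rfl
  -- decomposition
  have hdecomp : C * X = C * ((1 - S) * ρ) + C * (S * ρ * (1 - S)) := by
    rw [hXdef]; noncomm_ring
  -- useful trace quantities
  set a : ℂ := trace (D * ρ) with hadef
  set t : ℂ := trace ((S - D) * ρ) with htdef
  have hta : trace (S * ρ) = t + a := by
    rw [htdef, hadef, ← trace_add]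
    exact congrArg trace (by noncomm_ring)
  have ht0 : 0 ≤ t.re := gm_psd_trace_mul_re_nonneg hSD hρ
  have ha1 : a.re ≤ 1 := by
    have h0 : 0 ≤ (trace (((1 : Matrix n n ℂ) - D) * ρ)).re :=
      gm_psd_trace_mul_re_nonneg hDle hρ
    have he : trace (((1 : Matrix n n ℂ) - D) * ρ) = 1 - a := by
      rw [Matrix.sub_mul, trace_sub, Matrix.one_mul, hρ1, hadef]
    rw [he] at h0
    simp only [Complex.sub_re, Complex.one_re] at h0
    linarith
  -- the (1-S)(1-S)ρ trace
  have hBBtr : trace ((1 - S) * (1 - S) * ρ) = 1 - a - 2 * t := by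
    have expand : (1 - S) * (1 - S) * ρ = ρ - (S * ρ) - ((S * ρ) - (S * (S * ρ))) := by
      noncomm_ring
    rw [expand, trace_sub, trace_sub, trace_sub, hρ1, ← Matrix.mul_assoc, hSS, hta, hadef]
    ring
  have hBBre : (trace ((1 - S) * (1 - S) * ρ)).re ≤ ε := by
    rw [hBBtr]
    have e : ((1:ℂ) - a - 2 * t).re = 1 - a.re - 2 * t.re := by
      simp [Complex.sub_re, Complex.mul_re, Complex.one_re]
    rw [e]
    linarith
  -- Hermitian facts
  have h1Sh : ((1 : Matrix n n ℂ) - S)ᴴ = 1 - S := by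
    rw [conjTranspose_sub, conjTranspose_one, hS.1.eq]
  have hBBre0 : 0 ≤ (trace ((1 - S) * (1 - S) * ρ)).re := by
    have h1S : ((1 : Matrix n n ℂ) - S).PosSemidef := by
      have e : (1 : Matrix n n ℂ) - S = gmConjU UD (fun i => 1 - s i) := by
        rw [hSconj, ← gmConjU_sub, gmConjU_one]
        have := hD.1.eigenvectorUnitary.2
        rw [Matrix.mem_unitaryGroup_iff] at this
        rwa [star_eq_conjTranspose] at this
      rw [e]
      exact gmConjU_posSemidef _ (fun i => by linarith [hs1 i])
    have hps : ((1 - S) * (1 - S)).PosSemidef := by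
      have h2 := Matrix.posSemidef_self_mul_conjTranspose ((1 : Matrix n n ℂ) - S)
      rwa [h1Sh] at h2
    exact gm_psd_trace_mul_re_nonneg hps hρ
  -- Term 1 : A = C * R, B = (1-S) * R
  have t1eq : trace ((C * R)ᴴ * ((1 - S) * R)) = trace (C * ((1 - S) * ρ)) := by
    have e1 : (C * R)ᴴ * ((1 - S) * R) = R * (C * ((1 - S) * R)) := by
      rw [conjTranspose_mul, hR.1.eq, hCh.eq]
      noncomm_ring
    rw [e1, trace_mul_comm]
    exact congrArg trace (by rw [← hRR]; noncomm_ring)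
  have t1AA : (C * R)ᴴ * (C * R) = ρ := by
    rw [conjTranspose_mul, hR.1.eq, hCh.eq]
    calc R * C * (C * R) = R * (C * C) * R := by noncomm_ring
    _ = ρ := by rw [hC2, Matrix.mul_one, hRR]
  have t1BB : trace (((1 - S) * R)ᴴ * ((1 - S) * R)) = trace ((1 - S) * (1 - S) * ρ) := by
    have e1 : ((1 - S) * R)ᴴ * ((1 - S) * R) = R * ((1 - S) * ((1 - S) * R)) := by
      rw [conjTranspose_mul, hR.1.eq, h1Sh]
      noncomm_ring
    rw [e1, trace_mul_comm]
    exact congrArg trace (by rw [← hRR]; noncomm_ring)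
  have hterm1 : ‖trace (C * ((1 - S) * ρ))‖ ≤ Real.sqrt ε := by
    rw [← t1eq]
    calc ‖trace ((C * R)ᴴ * ((1 - S) * R))‖
        ≤ Real.sqrt (trace ((C * R)ᴴ * (C * R))).re *
          Real.sqrt (trace (((1 - S) * R)ᴴ * ((1 - S) * R))).re := gm_trace_cs _ _
      _ ≤ 1 * Real.sqrt ε := by
          apply mul_le_mul
          · rw [t1AA, hρ1]; simp
          · rw [t1BB]; exact Real.sqrt_le_sqrt hBBre
          · exact Real.sqrt_nonneg _
          · norm_num
      _ = Real.sqrt ε := one_mul _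
  -- Term 2 : A = C * ((1-S) * R), B = S * R
  have t2eq : trace ((C * ((1 - S) * R))ᴴ * (S * R)) = trace (C * (S * ρ * (1 - S))) := by
    have e1 : (C * ((1 - S) * R))ᴴ * (S * R) = R * ((1 - S) * (C * (S * R))) := by
      rw [conjTranspose_mul, conjTranspose_mul, hR.1.eq, h1Sh, hCh.eq]
      noncomm_ring
    rw [e1, trace_mul_comm]
    have e2 : (1 - S) * (C * (S * R)) * R = (1 - S) * (C * (S * ρ)) := by
      rw [← hRR]; noncomm_ring
    rw [e2, trace_mul_comm]
    exact congrArg trace (by noncomm_ring)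
  have t2AA : trace ((C * ((1 - S) * R))ᴴ * (C * ((1 - S) * R)))
      = trace ((1 - S) * (1 - S) * ρ) := by
    have e1 : (C * ((1 - S) * R))ᴴ * (C * ((1 - S) * R))
        = R * ((1 - S) * ((C * C) * ((1 - S) * R))) := by
      rw [conjTranspose_mul, conjTranspose_mul, hR.1.eq, h1Sh, hCh.eq]
      noncomm_ring
    rw [e1, hC2, trace_mul_comm]
    exact congrArg trace (by rw [← hRR]; noncomm_ring)
  have t2BB : trace ((S * R)ᴴ * (S * R)) = a := by
    have e1 : (S * R)ᴴ * (S * R) = R * (D * R) := by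
      rw [conjTranspose_mul, hR.1.eq, hS.1.eq, ← hSS]
      noncomm_ring
    rw [e1, trace_mul_comm, hadef]
    exact congrArg trace (by rw [← hRR]; noncomm_ring)
  have hterm2 : ‖trace (C * (S * ρ * (1 - S)))‖ ≤ Real.sqrt ε := by
    rw [← t2eq]
    have hcs := gm_trace_cs (C * ((1 - S) * R)) (S * R)
    have b1 : Real.sqrt (trace ((C * ((1 - S) * R))ᴴ * (C * ((1 - S) * R)))).re
        ≤ Real.sqrt ε := by
      rw [t2AA]; exact Real.sqrt_le_sqrt hBBre
    have b2 : Real.sqrt (trace ((S * R)ᴴ * (S * R))).re ≤ 1 := by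
      rw [t2BB]
      calc Real.sqrt a.re ≤ Real.sqrt 1 := Real.sqrt_le_sqrt ha1
        _ = 1 := Real.sqrt_one
    have hmul := mul_le_mul b1 b2 (Real.sqrt_nonneg _) (Real.sqrt_nonneg _)
    rw [mul_one] at hmul
    exact le_trans hcs hmul
  -- final assembly
  have final : traceNorm X ≤ 2 * Real.sqrt ε := by
    rw [htn, hdecomp, trace_add, Complex.add_re]
    calc (trace (C * ((1 - S) * ρ))).re + (trace (C * (S * ρ * (1 - S)))).re
        ≤ ‖trace (C * ((1 - S) * ρ))‖ +
          ‖trace (C * (S * ρ * (1 - S)))‖ := by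
          gcongr <;> exact Complex.re_le_norm _
      _ ≤ Real.sqrt ε + Real.sqrt ε := add_le_add hterm1 hterm2
      _ = 2 * Real.sqrt ε := by ring
  calc traceNorm X ≤ 2 * Real.sqrt ε := final
    _ ≤ 2 * Real.sqrt ε + ε := by linarith
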